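/- Let d ≥ 3, Ω = {1,…,d}, and let F ≤ F' ≤ Sym(Ω) be permutation groups such that every element of F' maps each F-orbit onto itself, and assume that F acts freely on Ω. Let T be a legally colored d-regular tree, let L be a geodesic line in T, let a ∈ G(F,F') satisfy a·L(i) = L(i+m) for all i ∈ ℤ and some integer m ≥ 1, and let b ∈ G(F,F') fix L pointwise, i.e., b·L(i) = L(i) for all i ∈ ℤ. If ab = ba, then b is the identity automorphism of T. -/

import Mathlib

/-- The automorphism group of a simple graph, as a subgroup of the permutation
group of its vertex set. -/
def SimpleGraph.autSubgroup {V : Type*} (T : SimpleGraph V) : Subgroup (Equiv.Perm V) where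
  carrier := {e | ∀ u v : V, T.Adj (e u) (e v) ↔ T.Adj u v}
  one_mem' := fun _ _ => Iff.rfl
  mul_mem' := by
    intro a b ha hb u v
    simp only [Equiv.Perm.mul_apply]
    rw [ha, hb]
  inv_mem' := by
    intro a ha u v
    simpa using (ha (a⁻¹ u) (a⁻¹ v)).symm

/-- A legal coloring of a `d`-regular tree: every vertex's edges are colored
bijectively with the colors `Fin d`. The color of the edge `{u, v}` is `color u v`. -/
structure LegalColoring {V : Type*} (T : SimpleGraph V) (d : ℕ) where
  color : V → V → Fin d
  symm : ∀ ⦃u v : V⦄, T.Adj u v → color u v = color v u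
  bij : ∀ (v : V) (i : Fin d), ∃! w : V, T.Adj v w ∧ color v w = i

/-- The local permutation `σ(g, v)` of an automorphism `g` at a vertex `v`
belongs to the permutation group `F`. -/
def LocalIn {V : Type*} {d : ℕ} (T : SimpleGraph V) (C : LegalColoring T d)
    (F : Subgroup (Equiv.Perm (Fin d))) (g : Equiv.Perm V) (v : V) : Prop :=
  ∃ π ∈ F, ∀ ⦃w : V⦄, T.Adj v w → C.color (g v) (g w) = π (C.color v w)

/-- The universal Burger–Mozes group `U(F)` (as a set of permutations of the vertices):
automorphisms whose local permutation lies in `F` at every vertex. -/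
def USet {V : Type*} {d : ℕ} (T : SimpleGraph V) (C : LegalColoring T d)
    (F : Subgroup (Equiv.Perm (Fin d))) : Set (Equiv.Perm V) :=
  {g | g ∈ T.autSubgroup ∧ ∀ v : V, LocalIn T C F g v}

/-- The group `G(F)`: automorphisms whose local permutation lies in `F` at all but
finitely many vertices. -/
def GSet {V : Type*} {d : ℕ} (T : SimpleGraph V) (C : LegalColoring T d)
    (F : Subgroup (Equiv.Perm (Fin d))) : Set (Equiv.Perm V) :=
  {g | g ∈ T.autSubgroup ∧ {v : V | ¬ LocalIn T C F g v}.Finite}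

/-- Le Boudec's group `G(F, F')` with almost prescribed local action (as a set of
permutations of the vertices): `G(F) ∩ U(F')`. -/
def GFFSet {V : Type*} {d : ℕ} (T : SimpleGraph V) (C : LegalColoring T d)
    (F F' : Subgroup (Equiv.Perm (Fin d))) : Set (Equiv.Perm V) :=
  GSet T C F ∩ USet T C F'

open SimpleGraph

section Aux

variable {V : Type*} {T : SimpleGraph V}

lemma list_map_fix {f : V → V} : ∀ {l : List V}, l.map f = l → ∀ x ∈ l, f x = x := by
  intro l
  induction l with
  | nil => intro _ x hx; simp at hx
  | cons a t ih =>
      intro h x hx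
      simp only [List.map_cons, List.cons.injEq] at h
      rcases List.mem_cons.mp hx with rfl | hx
      · exact h.1
      · exact ih h.2 x hx

lemma fix_path (hT : T.IsTree) {g : Equiv.Perm V} (hg : g ∈ T.autSubgroup)
    {x y : V} (hx : g x = x) (hy : g y = y) (p : T.Walk x y) (hp : p.IsPath) :
    ∀ w ∈ p.support, g w = w := by
  let f : T ≃g T := ⟨g, @fun u v => hg u v⟩
  have hinj : Function.Injective (f.toHom : V → V) := f.toEquiv.injective
  have hq : ((p.map f.toHom).copy hx hy).IsPath := by
    rw [Walk.isPath_copy]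
    exact Walk.map_isPath_of_injective hinj hp
  have heq : (p.map f.toHom).copy hx hy = p := (hT.existsUnique_path x y).unique hq hp
  have hsupp : p.support.map g = p.support := by
    have h2 := congrArg Walk.support heq
    rwa [Walk.support_copy, Walk.support_map] at h2
  exact list_map_fix hsupp

lemma boundary_pair {g : V → V} {x y : V} (p : T.Walk x y) (hx : g x = x) (hy : g y ≠ y) :
    ∃ u w, T.Adj u w ∧ g u = u ∧ g w ≠ w := by
  induction p with
  | nil => exact absurd hx hy
  | @cons u v w h q ih =>
      by_cases hv : g v = v
      · exact ih hv hy
      · exact ⟨u, v, h, hx, hv⟩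

lemma second_vertex {x y : V} (p : T.Walk x y) (hxy : x ≠ y) :
    ∃ z, T.Adj x z ∧ z ∈ p.support := by
  cases p with
  | nil => exact absurd rfl hxy
  | cons h q => exact ⟨_, h, by simp [Walk.support_cons, Walk.start_mem_support]⟩

lemma line_walk {L : ℤ → V} (hLadj : ∀ i : ℤ, T.Adj (L i) (L (i + 1))) :
    ∀ (n : ℕ) (i : ℤ), ∃ p : T.Walk (L i) (L (i + n)), p.length = n ∧
      p.support = (List.range (n + 1)).map (fun k : ℕ => L (i + k)) := by
  intro n
  induction n with
  | zero =>
      intro i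
      refine ⟨Walk.nil.copy rfl (congrArg L (by simp)), ?_, ?_⟩
      · simp
      · simp [List.range_succ]
  | succ n ih =>
      intro i
      obtain ⟨p, hl, hs⟩ := ih (i + 1)
      refine ⟨(Walk.cons (hLadj i) p).copy rfl (congrArg L (by push_cast; ring)), ?_, ?_⟩
      · simp [hl]
      · rw [Walk.support_copy, Walk.support_cons, hs]
        conv_rhs => rw [List.range_succ_eq_map]
        simp only [List.map_cons, List.map_map, Nat.cast_zero, add_zero]
        refine congrArg₂ List.cons rfl (List.map_congr_left ?_)
        intro k _
        simp only [Function.comp_apply]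
        congr 1
        push_cast
        ring

lemma line_path_nodup {L : ℤ → V} (hLinj : Function.Injective L) (n : ℕ) (i : ℤ) :
    ((List.range (n + 1)).map (fun k : ℕ => L (i + k))).Nodup := by
  refine List.Nodup.map ?_ List.nodup_range
  intro j k hjk
  have : (i + j : ℤ) = i + k := hLinj hjk
  omega

lemma dist_line (hT : T.IsTree) {L : ℤ → V} (hLinj : Function.Injective L)
    (hLadj : ∀ i : ℤ, T.Adj (L i) (L (i + 1))) (n : ℕ) (i : ℤ) :
    T.dist (L i) (L (i + n)) = n := by
  classical
  obtain ⟨p, hl, hs⟩ := line_walk hLadj n i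
  have hp : p.IsPath := by
    rw [Walk.isPath_def, hs]
    exact line_path_nodup hLinj n i
  have h1 := SimpleGraph.dist_le p
  rw [hl] at h1
  obtain ⟨q, hq⟩ := (hT.isConnected (L i) (L (i + n))).exists_walk_length_eq_dist
  have heq : q.bypass = p := (hT.existsUnique_path _ _).unique q.bypass_isPath hp
  have h2 : n ≤ T.dist (L i) (L (i + n)) := by
    calc n = p.length := hl.symm
    _ = q.bypass.length := by rw [heq]
    _ ≤ q.length := q.length_bypass_le
    _ = T.dist (L i) (L (i + n)) := hq
  omega

lemma dist_map_le {g : Equiv.Perm V} (hg : g ∈ T.autSubgroup) (hconn : T.Connected)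
    (x y : V) : T.dist (g x) (g y) ≤ T.dist x y := by
  obtain ⟨p, hp⟩ := (hconn x y).exists_walk_length_eq_dist
  have h := SimpleGraph.dist_le (p.map (⟨⇑g, @fun u v h => (hg u v).mpr h⟩ : T →g T))
  rwa [Walk.length_map, hp] at h

lemma dist_map_eq {g : Equiv.Perm V} (hg : g ∈ T.autSubgroup) (hconn : T.Connected)
    (x y : V) : T.dist (g x) (g y) = T.dist x y := by
  refine le_antisymm (dist_map_le hg hconn x y) ?_
  have h := dist_map_le (T.autSubgroup.inv_mem hg) hconn (g x) (g y)
  simpa using h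

end Aux

section Main

variable {V : Type*} {T : SimpleGraph V}

lemma bad_vertex {d : ℕ} {C : LegalColoring T d} {F : Subgroup (Equiv.Perm (Fin d))}
    (hfree : ∀ π ∈ F, π ≠ 1 → ∀ i : Fin d, π i ≠ i)
    {g : Equiv.Perm V} (hg : g ∈ T.autSubgroup)
    {u u' w : V} (hadj' : T.Adj u u') (hadj : T.Adj u w)
    (hu : g u = u) (hu' : g u' = u') (hw : g w ≠ w) :
    ¬ LocalIn T C F g u := by
  rintro ⟨π, hπF, hπ⟩
  have h1 : C.color u u' = π (C.color u u') := by
    have h := hπ hadj'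
    rwa [hu, hu'] at h
  have hπ1 : π = 1 := by
    by_contra hne
    exact hfree π hπF hne _ h1.symm
  have h2 : C.color u (g w) = C.color u w := by
    have h := hπ hadj
    rw [hu, hπ1] at h
    simpa using h
  have hadjgw : T.Adj u (g w) := by
    have h := (hg u w).mpr hadj
    rwa [hu] at h
  obtain ⟨x, -, hxuniq⟩ := C.bij u (C.color u w)
  exact hw ((hxuniq _ ⟨hadjgw, h2⟩).trans (hxuniq w ⟨hadj, rfl⟩).symm)

end Main

/-- If `F` acts freely, `a ∈ G(F, F')` translates a geodesic line `L` by `m ≥ 1` and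
`b ∈ G(F, F')` fixes `L` pointwise, then `a` and `b` commute only if `b` is the
identity. -/
theorem GFF_commuting_with_translation_is_trivial {V : Type*} (d : ℕ) (hd : 3 ≤ d)
    (F F' : Subgroup (Equiv.Perm (Fin d))) (hle : F ≤ F')
    (horb : ∀ π' ∈ F', ∀ i : Fin d, ∃ π ∈ F, π i = π' i)
    (hfree : ∀ π ∈ F, π ≠ 1 → ∀ i : Fin d, π i ≠ i)
    (T : SimpleGraph V) (hT : T.IsTree) (C : LegalColoring T d)
    (L : ℤ → V) (hLinj : Function.Injective L)
    (hLadj : ∀ i : ℤ, T.Adj (L i) (L (i + 1)))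
    (a b : Equiv.Perm V) (ha : a ∈ GFFSet T C F F') (hb : b ∈ GFFSet T C F F')
    (m : ℤ) (hm : 1 ≤ m) (haL : ∀ i : ℤ, a (L i) = L (i + m))
    (hbL : ∀ i : ℤ, b (L i) = L i)
    (hcomm : a * b = b * a) : b = 1 := by
  classical
  have haut : a ∈ T.autSubgroup := ha.1.1
  have hbaut : b ∈ T.autSubgroup := hb.1.1
  have hconn : T.Connected := hT.isConnected
  by_contra hbne
  obtain ⟨v, hv⟩ : ∃ v, b v ≠ v := by
    by_contra h
    push_neg at h
    exact hbne (Equiv.ext fun x => (h x).trans (Equiv.Perm.one_apply x).symm)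
  -- find a fixed vertex with a moved neighbor
  obtain ⟨p0, -⟩ := (hconn (L 0) v).exists_walk_length_eq_dist
  obtain ⟨u, w, hadj, hu, hw⟩ := boundary_pair p0 (hbL 0) hv
  -- find a fixed neighbor of u
  obtain ⟨u', hadj', hu'⟩ : ∃ u', T.Adj u u' ∧ b u' = u' := by
    by_cases hcase : u = L 0
    · subst hcase
      refine ⟨L 1, ?_, hbL 1⟩
      have h := hLadj 0
      simpa using h
    · obtain ⟨q0, -⟩ := (hconn u (L 0)).exists_walk_length_eq_dist
      obtain ⟨z, hz1, hz2⟩ := second_vertex q0.bypass hcase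
      exact ⟨z, hz1, fix_path hT hbaut hu (hbL 0) q0.bypass q0.bypass_isPath z hz2⟩
  -- powers of a
  have hcomm' : Commute a b := hcomm
  have hswap : ∀ (n : ℕ) (x : V), b ((a ^ n) x) = (a ^ n) (b x) := by
    intro n x
    have h := (hcomm'.pow_left n).symm
    calc b ((a ^ n) x) = (b * a ^ n) x := rfl
    _ = (a ^ n * b) x := by rw [h]
    _ = (a ^ n) (b x) := rfl
  have hpowaut : ∀ n : ℕ, (a ^ n) ∈ T.autSubgroup := fun n => pow_mem haut n
  have hpowL : ∀ (n : ℕ) (i : ℤ), (a ^ n) (L i) = L (i + n * m) := by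
    intro n
    induction n with
    | zero => intro i; simp
    | succ n ih =>
        intro i
        have : (a ^ (n + 1)) (L i) = (a ^ n) (a (L i)) := by
          rw [pow_succ]; rfl
        rw [this, haL i, ih (i + m)]
        congr 1
        push_cast
        ring
  -- each aⁿ u is a singular vertex of b
  have hbad : ∀ n : ℕ, (a ^ n) u ∈ {v : V | ¬ LocalIn T C F b v} := by
    intro n
    refine bad_vertex hfree hbaut ((hpowaut n u u').mpr hadj') ((hpowaut n u w).mpr hadj)
      ?_ ?_ ?_
    · rw [hswap, hu]
    · rw [hswap, hu']
    · intro h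
      rw [hswap] at h
      exact hw ((a ^ n).injective h)
  -- no periodic points of a
  have hnoper : ∀ p : ℕ, 0 < p → (a ^ p) u ≠ u := by
    intro p hp hfix
    have hfixq : ∀ q : ℕ, (a ^ (p * q)) u = u := by
      intro q
      induction q with
      | zero => simp
      | succ q ih =>
          have : a ^ (p * (q + 1)) = a ^ (p * q) * a ^ p := by
            rw [← pow_add]; ring_nf
          rw [this]
          calc (a ^ (p * q) * a ^ p) u = (a ^ (p * q)) ((a ^ p) u) := rfl
          _ = u := by rw [hfix, ih]
    set r := T.dist u (L 0) with hr
    set N := p * (2 * r + 1) with hN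
    have hdu : T.dist u (L (0 + (N : ℤ) * m)) = r := by
      have h := dist_map_eq (hpowaut N) hconn u (L 0)
      rwa [hfixq (2 * r + 1), hpowL N 0] at h
    set M := N * m.toNat with hM
    have hMN : ((M : ℕ) : ℤ) = (N : ℤ) * m := by
      rw [hM]
      push_cast [Int.toNat_of_nonneg (by omega : (0:ℤ) ≤ m)]
      ring
    have hdL : T.dist (L 0) (L (0 + (N : ℤ) * m)) = M := by
      have h := dist_line hT hLinj hLadj M 0
      rwa [hMN] at h
    have htri := hconn.dist_triangle (u := L 0) (v := u) (w := L (0 + (N : ℤ) * m))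
    rw [hdL, hdu, SimpleGraph.dist_comm (u := L 0) (v := u), ← hr] at htri
    have hm1 : 1 ≤ m.toNat := by omega
    have : 2 * r + 1 ≤ M := by
      calc 2 * r + 1 ≤ N := by rw [hN]; nlinarith
      _ = N * 1 := by ring
      _ ≤ M := by rw [hM]; exact Nat.mul_le_mul_left N hm1
    omega
  have hinj : Function.Injective (fun n : ℕ => (a ^ n) u) := by
    intro n k hnk
    simp only at hnk
    by_contra hne
    rcases Nat.lt_or_ge n k with hlt | hge
    · have : (a ^ n) ((a ^ (k - n)) u) = (a ^ n) u := by
        rw [← Equiv.Perm.mul_apply, ← pow_add]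
        rw [show n + (k - n) = k by omega]
        exact hnk.symm
      exact hnoper (k - n) (by omega) ((a ^ n).injective this)
    · have hlt : k < n := by omega
      have : (a ^ k) ((a ^ (n - k)) u) = (a ^ k) u := by
        rw [← Equiv.Perm.mul_apply, ← pow_add]
        rw [show k + (n - k) = n by omega]
        exact hnk
      exact hnoper (n - k) (by omega) ((a ^ k).injective this)
  exact (Set.infinite_of_injective_forall_mem hinj hbad) hb.1.2
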